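/- Let q ≥ 1 and ℓ ≥ 2, and suppose k = ℓ. Then in any ℓ-valid (q,ℓ)-colouring of n eBugs, no eBug is coloured with a constant word (all k LEDs the same colour); consequently n·ℓ ≤ q^ℓ − q. -/
import Mathlib


/-- A `(q,k)`-colouring of `n` eBugs is `ℓ`-valid if its `ℓ`-window map is injective. -/
def ebugValid (q k ℓ n : ℕ) (c : Fin n → ZMod k → Fin q) : Prop :=
  Function.Injective (fun p : Fin n × ZMod k => fun s : Fin ℓ => c p.1 (p.2 + (s : ℕ)))

/-- The eBug number `E(q,k,ℓ)`: the greatest `n` admitting an `ℓ`-valid `(q,k)`-colouring. -/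
noncomputable def eBugNumber (q k ℓ : ℕ) : ℕ :=
  sSup {n : ℕ | ∃ c : Fin n → ZMod k → Fin q, ebugValid q k ℓ n c}

theorem stmt1 (q ℓ n : ℕ) (hq : 1 ≤ q) (hℓ : 2 ≤ ℓ)
    (c : Fin n → ZMod ℓ → Fin q) (hc : ebugValid q ℓ ℓ n c) :
    (∀ i : Fin n, ¬ ∃ a : Fin q, ∀ j : ZMod ℓ, c i j = a) ∧ n * ℓ ≤ q ^ ℓ - q := by
  haveI : NeZero ℓ := ⟨by omega⟩
  haveI : Fact (1 < ℓ) := ⟨by omega⟩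
  have hconst : ∀ i : Fin n, ¬ ∃ a : Fin q, ∀ j : ZMod ℓ, c i j = a := by
    rintro i ⟨a, ha⟩
    have h := hc (a₁ := (i, (0 : ZMod ℓ))) (a₂ := (i, (1 : ZMod ℓ)))
      (by funext s; simp [ha])
    have : (0 : ZMod ℓ) = 1 := congrArg Prod.snd h
    exact zero_ne_one this
  refine ⟨hconst, ?_⟩
  -- counting
  set f : Fin n × ZMod ℓ → (Fin ℓ → Fin q) :=
    fun p => fun s : Fin ℓ => c p.1 (p.2 + (s : ℕ)) with hf
  have hfi : Function.Injective f := hc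
  set S : Finset (Fin ℓ → Fin q) :=
    Finset.univ.filter (fun w => ∃ a : Fin q, ∀ s : Fin ℓ, w s = a) with hS
  have hmem : ∀ p : Fin n × ZMod ℓ, f p ∈ Finset.univ \ S := by
    intro p
    rcases p with ⟨i, j⟩
    simp only [hS, Finset.mem_sdiff, Finset.mem_univ, Finset.mem_filter, true_and]
    rintro ⟨a, ha⟩
    apply hconst i
    refine ⟨a, fun x => ?_⟩
    have hs := ha ⟨(x - j).val, ZMod.val_lt _⟩
    simp only [hf] at hs
    rwa [show ((((x - j).val : ℕ)) : ZMod ℓ) = x - j from ZMod.natCast_rightInverse _,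
      add_sub_cancel] at hs
  have hcardS : S.card = q := by
    have : S = Finset.univ.image (fun a : Fin q => (fun _ : Fin ℓ => a)) := by
      ext w
      simp only [hS, Finset.mem_filter, Finset.mem_univ, true_and, Finset.mem_image]
      constructor
      · rintro ⟨a, ha⟩; exact ⟨a, by funext s; exact (ha s).symm⟩
      · rintro ⟨a, rfl⟩; exact ⟨a, fun s => rfl⟩
    rw [this, Finset.card_image_of_injective _ (fun a b h => congrFun h ⟨0, by omega⟩),
      Finset.card_univ, Fintype.card_fin]
  have hinj : Set.InjOn f (Finset.univ : Finset (Fin n × ZMod ℓ)) := hfi.injOn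
  have hle := Finset.card_le_card_of_injOn f (fun p _ => hmem p) hinj
  rw [Finset.card_sdiff_of_subset (Finset.subset_univ _), Finset.card_univ, Finset.card_univ,
    Fintype.card_prod, ZMod.card, Fintype.card_fin, Fintype.card_pi] at hle
  simpa [hcardS] using hle
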